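/- Let d ≥ 2 and k ∈ {2, …, d−1} be integers and let s ≥ 0 be a fixed real number. Define, for r > 0 with cosh r ≥ cosh s, g_r(s) := e^{−r(k−1)} · ω_k · ∫₀^{arcosh(cosh r / cosh s)} (sinh u)^{k−1} du. Then g_r(s) tends to (ω_k / ((k−1)·2^{k−1})) · (cosh s)^{−(k−1)} as r → ∞. -/

import Mathlib

open Real Filter

private lemma gr_aux (n : ℕ) (hn : 1 ≤ n) (s : ℝ) (hs : 0 ≤ s) :
    Tendsto (fun r : ℝ => Real.exp (-(r * (n : ℝ))) *
        ∫ u in (0:ℝ)..Real.log (Real.cosh r / Real.cosh s +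
            Real.sqrt ((Real.cosh r / Real.cosh s) ^ 2 - 1)), Real.sinh u ^ n)
      atTop (nhds ((n:ℝ)⁻¹ * (2:ℝ)⁻¹ ^ n * ((Real.cosh s)⁻¹) ^ n)) := by
  have hcs : (0:ℝ) < Real.cosh s := Real.cosh_pos s
  have hn0 : (n:ℝ) ≠ 0 := Nat.cast_ne_zero.2 (by omega)
  have hn1 : (1:ℝ) ≤ (n:ℝ) := by exact_mod_cast hn
  set R : ℝ → ℝ := fun r => Real.log (Real.cosh r / Real.cosh s +
      Real.sqrt ((Real.cosh r / Real.cosh s) ^ 2 - 1)) with hRdef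
  set φ : ℝ → ℝ := fun u => (2:ℝ)⁻¹ ^ n * Real.exp u ^ n with hφdef
  have hφc : Continuous φ := by fun_prop
  have hsinc : Continuous (fun u : ℝ => Real.sinh u ^ n) := by fun_prop
  -- basic facts for r ≥ s
  have hA1 : ∀ r : ℝ, s ≤ r → 1 ≤ Real.cosh r / Real.cosh s := by
    intro r hr
    have hr0 : 0 ≤ r := hs.trans hr
    exact (one_le_div hcs).2 (Real.cosh_le_cosh.2
      (by rwa [abs_of_nonneg hs, abs_of_nonneg hr0]))
  have hA2 : ∀ r : ℝ, s ≤ r → 0 ≤ (Real.cosh r / Real.cosh s) ^ 2 - 1 := by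
    intro r hr; nlinarith [hA1 r hr]
  have hpos : ∀ r : ℝ, s ≤ r → 0 < Real.cosh r / Real.cosh s +
      Real.sqrt ((Real.cosh r / Real.cosh s) ^ 2 - 1) := by
    intro r hr
    have := Real.sqrt_nonneg ((Real.cosh r / Real.cosh s) ^ 2 - 1)
    linarith [hA1 r hr]
  have hR0 : ∀ r : ℝ, s ≤ r → 0 ≤ R r := by
    intro r hr
    exact Real.log_nonneg (le_trans (hA1 r hr)
      (le_add_of_nonneg_right (Real.sqrt_nonneg _)))
  have hexpR : ∀ r : ℝ, s ≤ r → Real.exp (R r) = Real.cosh r / Real.cosh s +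
      Real.sqrt ((Real.cosh r / Real.cosh s) ^ 2 - 1) := by
    intro r hr; exact Real.exp_log (hpos r hr)
  have hRr : ∀ r : ℝ, s ≤ r → R r ≤ r := by
    intro r hr
    have hr0 : 0 ≤ r := hs.trans hr
    rw [hRdef, Real.log_le_iff_le_exp (hpos r hr)]
    have h1 : Real.cosh r / Real.cosh s ≤ Real.cosh r :=
      div_le_self (Real.cosh_pos r).le (Real.one_le_cosh s)
    have h2 : Real.sqrt ((Real.cosh r / Real.cosh s) ^ 2 - 1) ≤ Real.sinh r := by
      have hsq : (Real.cosh r / Real.cosh s) ^ 2 - 1 ≤ Real.sinh r ^ 2 := by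
        have := Real.sinh_sq r
        have hA0 : 0 ≤ Real.cosh r / Real.cosh s := by positivity
        nlinarith [(Real.cosh_pos r).le]
      calc Real.sqrt ((Real.cosh r / Real.cosh s) ^ 2 - 1)
          ≤ Real.sqrt (Real.sinh r ^ 2) := Real.sqrt_le_sqrt hsq
        _ = Real.sinh r := Real.sqrt_sq (Real.sinh_nonneg_iff.2 hr0)
    linarith [Real.cosh_add_sinh r]
  -- the value of the main integral
  have hint : ∀ b : ℝ, (∫ u in (0:ℝ)..b, φ u) =
      (n:ℝ)⁻¹ * (2:ℝ)⁻¹ ^ n * (Real.exp b ^ n - 1) := by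
    intro b
    have h1 : (∫ u in (0:ℝ)..b, Real.exp ((n:ℝ) * u)) =
        (n:ℝ)⁻¹ * (Real.exp ((n:ℝ) * b) - 1) := by
      rw [intervalIntegral.integral_comp_mul_left Real.exp hn0]
      simp [integral_exp, smul_eq_mul]
    have h2 : (∫ u in (0:ℝ)..b, φ u) =
        (2:ℝ)⁻¹ ^ n * ∫ u in (0:ℝ)..b, Real.exp ((n:ℝ) * u) := by
      rw [← intervalIntegral.integral_const_mul]
      congr 1; funext u; rw [Real.exp_nat_mul]
    rw [h2, h1, Real.exp_nat_mul]; ring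
  -- tendsto of exp (R r - r)
  have te : Tendsto (fun r : ℝ => Real.exp (-r)) atTop (nhds 0) :=
    Real.tendsto_exp_neg_atTop_nhds_zero
  have tc : Tendsto (fun r : ℝ => Real.cosh r * Real.exp (-r)) atTop (nhds (1/2)) := by
    have heq : ∀ r : ℝ, Real.cosh r * Real.exp (-r) = 1/2 + Real.exp (-(2*r)) / 2 := by
      intro r
      rw [Real.cosh_eq]
      have h1 : Real.exp r * Real.exp (-r) = 1 := by rw [← Real.exp_add]; simp
      have h2 : Real.exp (-r) * Real.exp (-r) = Real.exp (-(2*r)) := by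
        rw [← Real.exp_add]; ring_nf
      linear_combination h1 / 2 + h2 / 2
    have t2r : Tendsto (fun r : ℝ => Real.exp (-(2*r))) atTop (nhds 0) :=
      Real.tendsto_exp_neg_atTop_nhds_zero.comp
        (tendsto_id.const_mul_atTop two_pos)
    have h3 : Tendsto (fun r : ℝ => 1/2 + Real.exp (-(2*r)) / 2) atTop
        (nhds (1/2 + 0/2)) := tendsto_const_nhds.add (t2r.div_const 2)
    simp only [zero_div, add_zero] at h3
    exact h3.congr (fun r => (heq r).symm)
  have t1 : Tendsto (fun r : ℝ => Real.exp (R r - r)) atTop (nhds (Real.cosh s)⁻¹) := by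
    have tsq : Tendsto (fun r : ℝ => Real.sqrt ((Real.cosh r * Real.exp (-r) / Real.cosh s) ^ 2
        - Real.exp (-r) ^ 2)) atTop (nhds ((2 * Real.cosh s)⁻¹)) := by
      have h := (((tc.div_const (Real.cosh s)).pow 2).sub (te.pow 2)).sqrt
      have hval : Real.sqrt ((1/2 / Real.cosh s) ^ 2 - 0 ^ 2) = (2 * Real.cosh s)⁻¹ := by
        have : (1/2 / Real.cosh s) ^ 2 - 0 ^ 2 = ((2 * Real.cosh s)⁻¹) ^ 2 := by
          field_simp
          ring
        rw [this, Real.sqrt_sq (by positivity)]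
      rwa [hval] at h
    have tsum : Tendsto (fun r : ℝ => Real.cosh r * Real.exp (-r) / Real.cosh s +
        Real.sqrt ((Real.cosh r * Real.exp (-r) / Real.cosh s) ^ 2 - Real.exp (-r) ^ 2))
        atTop (nhds ((2 * Real.cosh s)⁻¹ + (2 * Real.cosh s)⁻¹)) := by
      have h1 : Tendsto (fun r : ℝ => Real.cosh r * Real.exp (-r) / Real.cosh s)
          atTop (nhds (1/2 / Real.cosh s)) := tc.div_const _
      have : (1:ℝ)/2 / Real.cosh s = (2 * Real.cosh s)⁻¹ := by field_simp
      rw [this] at h1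
      exact h1.add tsq
    have hval2 : (2 * Real.cosh s)⁻¹ + (2 * Real.cosh s)⁻¹ = (Real.cosh s)⁻¹ := by
      rw [← two_mul, mul_inv, ← mul_assoc,
        mul_inv_cancel₀ (by norm_num : (2:ℝ) ≠ 0), one_mul]
    rw [hval2] at tsum
    refine tsum.congr' ?_
    filter_upwards [eventually_ge_atTop s] with r hr
    have h1 : Real.exp (R r - r) = Real.exp (R r) * Real.exp (-r) := by
      rw [← Real.exp_add]; ring_nf
    rw [h1, hexpR r hr, add_mul]
    congr 1
    · ring
    · rw [← Real.sqrt_sq (Real.exp_pos (-r)).le, ← Real.sqrt_mul (hA2 r hr)]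
      rw [Real.sqrt_sq (Real.exp_pos (-r)).le]
      congr 1
      field_simp
  -- main term
  have tE : Tendsto (fun r : ℝ => Real.exp (-(r * (n:ℝ)))) atTop (nhds 0) := by
    have hnpos : (0:ℝ) < (n:ℝ) := by exact_mod_cast (by omega : 0 < n)
    have h4 : Tendsto (fun r : ℝ => r * (n:ℝ)) atTop atTop :=
      tendsto_id.atTop_mul_const hnpos
    have h5 := Real.tendsto_exp_neg_atTop_nhds_zero.comp h4
    exact h5.congr (fun r => rfl)
  have tG : Tendsto (fun r : ℝ => (n:ℝ)⁻¹ * (2:ℝ)⁻¹ ^ n *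
      (Real.exp (R r - r) ^ n - Real.exp (-(r * (n:ℝ))))) atTop
      (nhds ((n:ℝ)⁻¹ * (2:ℝ)⁻¹ ^ n * (((Real.cosh s)⁻¹) ^ n - 0))) :=
    tendsto_const_nhds.mul ((t1.pow n).sub tE)
  -- pointwise bounds
  have hpt : ∀ u : ℝ, 0 ≤ u → Real.sinh u ^ n ≤ φ u ∧
      φ u - Real.sinh u ^ n ≤ (n:ℝ) * (2:ℝ)⁻¹ ^ n * Real.exp (((n:ℝ) - 1) * u) := by
    intro u hu
    have hsinh : Real.sinh u = Real.exp u / 2 * (1 - Real.exp (-(2*u))) := by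
      rw [Real.sinh_eq]
      have h3 : Real.exp u * Real.exp (-(2*u)) = Real.exp (-u) := by
        rw [← Real.exp_add]; ring_nf
      linear_combination h3 / 2
    have he1 : Real.exp (-(2*u)) ≤ 1 := Real.exp_le_one_iff.2 (by linarith)
    have he0 : (0:ℝ) < Real.exp (-(2*u)) := Real.exp_pos _
    constructor
    · have hs0 : 0 ≤ Real.sinh u := Real.sinh_nonneg_iff.2 hu
      have hle : Real.sinh u ≤ Real.exp u / 2 := by
        rw [Real.sinh_eq]
        have := (Real.exp_pos (-u)).le
        linarith
      calc Real.sinh u ^ n ≤ (Real.exp u / 2) ^ n := pow_le_pow_left₀ hs0 hle n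
        _ = φ u := by rw [hφdef]; ring
    · have hb : 1 - (n:ℝ) * Real.exp (-(2*u)) ≤ (1 - Real.exp (-(2*u))) ^ n := by
        have := one_add_mul_le_pow (a := -Real.exp (-(2*u))) (by linarith) n
        simpa [sub_eq_add_neg, mul_neg] using this
      have hkey : φ u * (1 - (n:ℝ) * Real.exp (-(2*u))) ≤ Real.sinh u ^ n := by
        rw [hsinh, mul_pow]
        have h4 : (Real.exp u / 2) ^ n = φ u := by rw [hφdef]; ring
        rw [← h4]
        exact mul_le_mul_of_nonneg_left hb (by positivity)
      have hφe : φ u * ((n:ℝ) * Real.exp (-(2*u))) =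
          (n:ℝ) * (2:ℝ)⁻¹ ^ n * Real.exp ((n:ℝ) * u - 2 * u) := by
        simp only [hφdef]
        rw [← Real.exp_nat_mul]
        have : Real.exp ((n:ℝ) * u) * Real.exp (-(2*u)) = Real.exp ((n:ℝ) * u - 2 * u) := by
          rw [← Real.exp_add]; ring_nf
        calc (2:ℝ)⁻¹ ^ n * Real.exp ((n:ℝ)*u) * ((n:ℝ) * Real.exp (-(2*u)))
            = (n:ℝ) * (2:ℝ)⁻¹ ^ n * (Real.exp ((n:ℝ)*u) * Real.exp (-(2*u))) := by ring
          _ = (n:ℝ) * (2:ℝ)⁻¹ ^ n * Real.exp ((n:ℝ) * u - 2 * u) := by rw [this]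
      have hle2 : Real.exp ((n:ℝ) * u - 2 * u) ≤ Real.exp (((n:ℝ) - 1) * u) :=
        Real.exp_le_exp.2 (by nlinarith)
      have hle3 : (n:ℝ) * (2:ℝ)⁻¹ ^ n * Real.exp ((n:ℝ) * u - 2 * u) ≤
          (n:ℝ) * (2:ℝ)⁻¹ ^ n * Real.exp (((n:ℝ) - 1) * u) :=
        mul_le_mul_of_nonneg_left hle2 (by positivity)
      nlinarith [hkey, hφe, hle3]
  -- error term
  set D : ℝ → ℝ := fun r => Real.exp (-(r * (n:ℝ))) *
      ∫ u in (0:ℝ)..R r, (φ u - Real.sinh u ^ n) with hDdef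
  have tD : Tendsto D atTop (nhds 0) := by
    have hnn : ∀ᶠ r in atTop, 0 ≤ D r := by
      filter_upwards [eventually_ge_atTop s] with r hr
      refine mul_nonneg (Real.exp_pos _).le ?_
      refine intervalIntegral.integral_nonneg (hR0 r hr) (fun u hu => ?_)
      linarith [(hpt u hu.1).1]
    have hub : ∀ᶠ r in atTop, D r ≤ (n:ℝ) * (2:ℝ)⁻¹ ^ n * (r * Real.exp (-r)) := by
      filter_upwards [eventually_ge_atTop s] with r hr
      have hr0 : 0 ≤ r := hs.trans hr
      have hC : ∀ u ∈ Set.Icc (0:ℝ) (R r), φ u - Real.sinh u ^ n ≤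
          (n:ℝ) * (2:ℝ)⁻¹ ^ n * Real.exp (((n:ℝ) - 1) * R r) := by
        intro u hu
        refine le_trans (hpt u hu.1).2 ?_
        have : Real.exp (((n:ℝ) - 1) * u) ≤ Real.exp (((n:ℝ) - 1) * R r) :=
          Real.exp_le_exp.2 (mul_le_mul_of_nonneg_left hu.2 (by linarith))
        have hp : (0:ℝ) ≤ (n:ℝ) * (2:ℝ)⁻¹ ^ n := by positivity
        exact mul_le_mul_of_nonneg_left this hp
      have hIineq : (∫ u in (0:ℝ)..R r, (φ u - Real.sinh u ^ n)) ≤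
          R r * ((n:ℝ) * (2:ℝ)⁻¹ ^ n * Real.exp (((n:ℝ) - 1) * R r)) := by
        have := intervalIntegral.integral_mono_on (hR0 r hr)
          ((hφc.sub hsinc).intervalIntegrable _ _)
          (intervalIntegrable_const (μ := MeasureTheory.volume)) hC
        rw [intervalIntegral.integral_const, smul_eq_mul, sub_zero] at this
        exact this
      have h2 : Real.exp (-(r * (n:ℝ))) * Real.exp (((n:ℝ) - 1) * R r) ≤ Real.exp (-r) := by
        rw [← Real.exp_add]
        apply Real.exp_le_exp.2
        nlinarith [hRr r hr, hR0 r hr]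
      calc D r ≤ Real.exp (-(r * (n:ℝ))) *
            (R r * ((n:ℝ) * (2:ℝ)⁻¹ ^ n * Real.exp (((n:ℝ) - 1) * R r))) :=
          mul_le_mul_of_nonneg_left hIineq (Real.exp_pos _).le
        _ = (n:ℝ) * (2:ℝ)⁻¹ ^ n *
            (R r * (Real.exp (-(r * (n:ℝ))) * Real.exp (((n:ℝ) - 1) * R r))) := by ring
        _ ≤ (n:ℝ) * (2:ℝ)⁻¹ ^ n * (r * Real.exp (-r)) := by
            refine mul_le_mul_of_nonneg_left ?_ (by positivity)
            exact mul_le_mul (hRr r hr) h2 (by positivity) hr0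
    have tub : Tendsto (fun r : ℝ => (n:ℝ) * (2:ℝ)⁻¹ ^ n * (r * Real.exp (-r)))
        atTop (nhds 0) := by
      have tr : Tendsto (fun r : ℝ => r * Real.exp (-r)) atTop (nhds 0) := by
        simpa using Real.tendsto_pow_mul_exp_neg_atTop_nhds_zero 1
      have := tr.const_mul ((n:ℝ) * (2:ℝ)⁻¹ ^ n)
      simpa using this
    exact squeeze_zero' hnn hub tub
  -- combine
  have hfinal : ∀ᶠ r in atTop,
      Real.exp (-(r * (n:ℝ))) * (∫ u in (0:ℝ)..R r, Real.sinh u ^ n) =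
      (n:ℝ)⁻¹ * (2:ℝ)⁻¹ ^ n * (Real.exp (R r - r) ^ n - Real.exp (-(r * (n:ℝ)))) - D r := by
    filter_upwards [eventually_ge_atTop s] with r hr
    have hsub : (∫ u in (0:ℝ)..R r, (φ u - Real.sinh u ^ n)) =
        (∫ u in (0:ℝ)..R r, φ u) - ∫ u in (0:ℝ)..R r, Real.sinh u ^ n :=
      intervalIntegral.integral_sub (hφc.intervalIntegrable _ _)
        (hsinc.intervalIntegrable _ _)
    have hexpn : Real.exp (-(r * (n:ℝ))) = Real.exp (-r) ^ n := by
      rw [← Real.exp_nat_mul]; ring_nf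
    have hern : Real.exp (R r - r) = Real.exp (-r) * Real.exp (R r) := by
      rw [← Real.exp_add]; ring_nf
    have hG : (n:ℝ)⁻¹ * (2:ℝ)⁻¹ ^ n * (Real.exp (R r - r) ^ n - Real.exp (-(r * (n:ℝ)))) =
        Real.exp (-(r * (n:ℝ))) * ∫ u in (0:ℝ)..R r, φ u := by
      rw [hint (R r), hern, mul_pow, hexpn]; ring
    have hints : (∫ u in (0:ℝ)..R r, Real.sinh u ^ n) =
        (∫ u in (0:ℝ)..R r, φ u) - ∫ u in (0:ℝ)..R r, (φ u - Real.sinh u ^ n) := by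
      rw [hsub]; ring
    rw [hints, mul_sub, hG, hDdef]
  have := (tG.sub tD).congr' (hfinal.mono (fun r h => h.symm))
  simpa using this

/-- Let 2 ≤ k ≤ d−1 and s ≥ 0 be fixed. With ω_k = 2π^{k/2}/Γ(k/2) and
arcosh z = log(z + √(z²−1)), the normalized flat-section volume
g_r(s) = e^{−r(k−1)} ω_k ∫₀^{arcosh(cosh r/cosh s)} sinh^{k−1} u du
tends to (ω_k/((k−1)2^{k−1})) (cosh s)^{−(k−1)} as r → ∞. -/
theorem g_r_tendsto (d k : ℕ) (hd : 2 ≤ d) (hk : 2 ≤ k) (hkd : k ≤ d - 1)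
    (s : ℝ) (hs : 0 ≤ s) :
    Tendsto (fun r : ℝ =>
        Real.exp (-(r * ((k : ℝ) - 1))) * (2 * Real.pi ^ ((k : ℝ) / 2) / Real.Gamma ((k : ℝ) / 2)) *
          ∫ u in (0:ℝ)..Real.log (Real.cosh r / Real.cosh s +
              Real.sqrt ((Real.cosh r / Real.cosh s) ^ 2 - 1)),
            Real.sinh u ^ (k - 1))
      atTop
      (nhds ((2 * Real.pi ^ ((k : ℝ) / 2) / Real.Gamma ((k : ℝ) / 2)) /
          (((k : ℝ) - 1) * 2 ^ (k - 1)) * (Real.cosh s ^ (k - 1))⁻¹)) := by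
  set ω : ℝ := 2 * Real.pi ^ ((k : ℝ) / 2) / Real.Gamma ((k : ℝ) / 2) with hω
  have hcast : ((k - 1 : ℕ) : ℝ) = (k:ℝ) - 1 := by
    have h1 : 1 ≤ k := by omega
    push_cast [h1]
    ring
  have h := (gr_aux (k - 1) (by omega) s hs).const_mul ω
  have hval : ω / (((k:ℝ) - 1) * 2 ^ (k - 1)) * (Real.cosh s ^ (k - 1))⁻¹ =
      ω * (((k:ℝ) - 1)⁻¹ * (2:ℝ)⁻¹ ^ (k - 1) * ((Real.cosh s)⁻¹) ^ (k - 1)) := by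
    simp only [div_eq_mul_inv, mul_inv, inv_pow]
    ring
  rw [hval, ← hcast]
  exact h.congr (fun r => by rw [hcast]; ring)
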